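/- If the partial order ≿ on X contains a crown, then there exists a pair of preferences on X that possesses no minimum upper bound with respect to single-crossing dominance. -/

import Mathlib

variable {X : Type*}

/-- Strict part of a binary relation. -/
def SPref (R : X → X → Prop) (x y : X) : Prop := R x y ∧ ¬ R y x

/-- A preference: a complete and transitive binary relation. -/
def IsPref (R : X → X → Prop) : Prop := (∀ x y, R x y ∨ R y x) ∧ Transitive R

/-- Single-crossing dominance (`R'` dominates `R`) w.r.t. the partial order `≤`. -/
def SC [PartialOrder X] (R' R : X → X → Prop) : Prop :=
  ∀ x y : X, y ≤ x → (R x y → R' x y) ∧ (SPref R x y → SPref R' x y)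

/-- Upper bound of a set of preferences w.r.t. single-crossing dominance. -/
def IsUB [PartialOrder X] (P : Set (X → X → Prop)) (R' : X → X → Prop) : Prop :=
  IsPref R' ∧ ∀ R ∈ P, SC R' R

/-- Minimum upper bound of a set of preferences w.r.t. single-crossing dominance. -/
def IsMUB [PartialOrder X] (P : Set (X → X → Prop)) (Rs : X → X → Prop) : Prop :=
  IsUB P Rs ∧ ∀ R'', IsUB P R'' → SC R'' Rs

/-- A `K`-crown (K ≥ 4 even) for the relation `le`, indexed by `1,…,K` with the cyclic
convention `a (K+1) = a 1`: non-adjacent elements are incomparable, and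
`a (k-1) > a k < a (k+1)` for each even `k` with `1 < k ≤ K`. -/
def IsCrown (le : X → X → Prop) (K : ℕ) (a : ℕ → X) : Prop :=
  4 ≤ K ∧ Even K ∧
  (∀ k k', 1 ≤ k → k + 2 ≤ k' → k' ≤ K → ¬(k = 1 ∧ k' = K) →
    ¬ le (a k) (a k') ∧ ¬ le (a k') (a k)) ∧
  (∀ k, 1 < k → k ≤ K → Even k →
    (le (a k) (a (k - 1)) ∧ ¬ le (a (k - 1)) (a k)) ∧
    (le (a k) (a (if k = K then 1 else k + 1)) ∧
      ¬ le (a (if k = K then 1 else k + 1)) (a k)))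

/-- `le` contains no crowns. -/
def CrownFree (le : X → X → Prop) : Prop := ¬ ∃ K a, IsCrown le K a

/-- A diamond: `a ≥ b ≥ d`, `a ≥ c ≥ d`, with `b, c` incomparable. -/
def IsDiamond (le : X → X → Prop) (a b c d : X) : Prop :=
  le b a ∧ le d b ∧ le c a ∧ le d c ∧ ¬ le b c ∧ ¬ le c b

/-- `le` contains no diamonds. -/
def DiamondFree (le : X → X → Prop) : Prop := ¬ ∃ a b c d, IsDiamond le a b c d

open Classical in
/-- Utility on `X` induced by values `f` on crown indices `1..K`, `0` off the crown. -/
noncomputable def crownU {Y : Type*} (K : ℕ) (a : ℕ → Y) (f : ℕ → ℕ) (x : Y) : ℕ :=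
  (Finset.Icc 1 K).sup fun k => if x = a k then f k else 0

/-- Preference induced by the utility `crownU`. -/
def crownR {Y : Type*} (K : ℕ) (a : ℕ → Y) (f : ℕ → ℕ) : Y → Y → Prop :=
  fun x y => crownU K a f y ≤ crownU K a f x

theorem crownR_isPref {Y : Type*} (K : ℕ) (a : ℕ → Y) (f : ℕ → ℕ) :
    IsPref (crownR K a f) :=
  ⟨fun _ _ => le_total _ _, fun _ _ _ h h' => le_trans h' h⟩

/-- First utility on crown indices. -/
def cf1 (K m k : ℕ) : ℕ := if k = K then m + 1 else m + 1 - k / 2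

/-- Second utility on crown indices. -/
def cf2 (K k : ℕ) : ℕ := if k = 1 ∨ k = K then 1 else 2

/-- Utility for an upper bound that is indifferent on the right edge at `c`. -/
def cg (c k : ℕ) : ℕ :=
  if k = c - 1 then 3 else if k % 2 = 1 then 2 else if k = c then 2 else 1

/-- If the partial order contains a crown, then some pair of preferences has no minimum
upper bound w.r.t. single-crossing dominance. -/
theorem crown_no_mub (X : Type*) [Nonempty X] [PartialOrder X]
    (h : ∃ K a, IsCrown (· ≤ · : X → X → Prop) K a) :
    ∃ R1 R2 : X → X → Prop, IsPref R1 ∧ IsPref R2 ∧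
      ¬ ∃ Rs : X → X → Prop, IsMUB {R1, R2} Rs := by
  classical
  obtain ⟨K, a, hK4, hKe, hinc, hedg⟩ := h
  obtain ⟨m, hm⟩ := hKe
  have hKe : Even K := ⟨m, hm⟩
  have hK0 : K % 2 = 0 := Nat.even_iff.mp hKe
  -- the crown elements are pairwise distinct
  have distinct : ∀ j l, 1 ≤ j → j ≤ K → 1 ≤ l → l ≤ K → j ≠ l → a j ≠ a l := by
    have key : ∀ j l, 1 ≤ j → j ≤ K → j < l → l ≤ K → a j ≠ a l := by
      intro j l hj1 hjK hjl hlK heq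
      by_cases hadj : l = j + 1
      · subst hadj
        rcases Nat.even_or_odd j with hje | hjo
        · have hj0 : j % 2 = 0 := Nat.even_iff.mp hje
          have hed := (hedg j (by omega) (by omega) hje).2.2
          rw [if_neg (by omega : ¬ j = K)] at hed
          exact hed (le_of_eq heq.symm)
        · have hj1' : (j + 1) % 2 = 0 := by
            have := Nat.odd_iff.mp hjo; omega
          have hed := (hedg (j + 1) (by omega) hlK (Nat.even_iff.mpr hj1')).1.2
          have hidx : j + 1 - 1 = j := by omega
          rw [hidx] at hed
          exact hed (le_of_eq heq)
      · by_cases h1K : j = 1 ∧ l = K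
        · have hed := (hedg K (by omega) le_rfl hKe).2.2
          rw [if_pos rfl] at hed
          rw [h1K.1, h1K.2] at heq
          exact hed (le_of_eq heq)
        · exact (hinc j l hj1 (by omega) hlK h1K).2 (le_of_eq heq.symm)
    intro j l hj1 hjK hl1 hlK hne heq
    rcases lt_or_gt_of_ne hne with hlt | hlt
    · exact key j l hj1 hjK hlt hlK heq
    · exact key l j hl1 hlK hlt hjK heq.symm
  -- comparabilities among crown elements: only equal indices or edges
  have comp : ∀ j l, 1 ≤ j → j ≤ K → 1 ≤ l → l ≤ K → a l ≤ a j →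
      j = l ∨ (Even l ∧ 1 < l ∧ (j = l - 1 ∨ j = (if l = K then 1 else l + 1))) := by
    intro j l hj1 hjK hl1 hlK hle
    by_cases hjl : j = l
    · exact Or.inl hjl
    right
    rcases lt_or_gt_of_ne hjl with hlt | hlt
    · -- j < l
      by_cases hadj : l = j + 1
      · rcases Nat.even_or_odd l with hle2 | hlo
        · have hl0 : l % 2 = 0 := Nat.even_iff.mp hle2
          exact ⟨hle2, by omega, Or.inl (by omega)⟩
        · -- l odd, j = l - 1 even
          exfalso
          have hl1' : l % 2 = 1 := Nat.odd_iff.mp hlo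
          have hje : Even j := Nat.even_iff.mpr (by omega)
          have hed := (hedg j (by omega) (by omega) hje).2.2
          rw [if_neg (by omega : ¬ j = K)] at hed
          exact hed (by rw [hadj] at hle; exact hle)
      · by_cases h1K : j = 1 ∧ l = K
        · refine ⟨by rw [h1K.2]; exact hKe, by omega, Or.inr ?_⟩
          rw [if_pos h1K.2]
          exact h1K.1
        · exact absurd hle (hinc j l hj1 (by omega) hlK h1K).2
    · -- l < j
      by_cases hadj : j = l + 1
      · rcases Nat.even_or_odd l with hle2 | hlo
        · have hl0 : l % 2 = 0 := Nat.even_iff.mp hle2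
          refine ⟨hle2, by omega, Or.inr ?_⟩
          rw [if_neg (by omega : ¬ l = K)]
          exact hadj
        · exfalso
          have hl1' : l % 2 = 1 := Nat.odd_iff.mp hlo
          have hje : Even j := Nat.even_iff.mpr (by omega)
          have hed := (hedg j (by omega) hjK hje).1.2
          have hidx : j - 1 = l := by omega
          rw [hidx] at hed
          exact hed hle
      · by_cases h1K : l = 1 ∧ j = K
        · exfalso
          have hed := (hedg K (by omega) le_rfl hKe).2.2
          rw [if_pos rfl] at hed
          rw [h1K.1, h1K.2] at hle
          exact hed hle
        · exact absurd hle (hinc l j hl1 (by omega) hjK h1K).1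
  -- evaluating the utility on and off the crown
  have U_at : ∀ (f : ℕ → ℕ) j, 1 ≤ j → j ≤ K → crownU K a f (a j) = f j := by
    intro f j hj1 hjK
    apply le_antisymm
    · apply Finset.sup_le
      intro k hk
      rw [Finset.mem_Icc] at hk
      by_cases hek : a j = a k
      · have hkj : k = j := by
          by_contra hne
          exact distinct j k hj1 hjK hk.1 hk.2 (fun hh => hne hh.symm) hek
        rw [if_pos hek, hkj]
      · rw [if_neg hek]
        exact Nat.zero_le _
    · have hj : j ∈ Finset.Icc 1 K := Finset.mem_Icc.mpr ⟨hj1, hjK⟩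
      have := Finset.le_sup (f := fun k => if a j = a k then f k else 0) hj
      simpa [crownU] using this
  have U_out : ∀ (f : ℕ → ℕ) x, (¬ ∃ j, 1 ≤ j ∧ j ≤ K ∧ x = a j) → crownU K a f x = 0 := by
    intro f x hx
    apply Nat.le_antisymm _ (Nat.zero_le _)
    apply Finset.sup_le
    intro k hk
    rw [Finset.mem_Icc] at hk
    rw [if_neg (fun hh => hx ⟨k, hk.1, hk.2, hh⟩)]
  -- bounds for the cyclic successor
  have hnxtb : ∀ l, 1 < l → l ≤ K → 1 ≤ (if l = K then 1 else l + 1) ∧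
      (if l = K then 1 else l + 1) ≤ K := by
    intro l h1 h2; split_ifs <;> omega
  -- single-crossing criterion for utility-based preferences
  have SCcrit : ∀ f g : ℕ → ℕ,
      (∀ j, 1 ≤ j → j ≤ K → 1 ≤ f j) →
      (∀ j, 1 ≤ j → j ≤ K → 1 ≤ g j) →
      (∀ l, Even l → 1 < l → l ≤ K →
        g l < g (l - 1) ∧ f (if l = K then 1 else l + 1) = f l ∧
          g l ≤ g (if l = K then 1 else l + 1)) →
      SC (crownR K a g) (crownR K a f) := by
    intro f g hf hg hE x y hxy
    by_cases hx : ∃ j, 1 ≤ j ∧ j ≤ K ∧ x = a j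
    · obtain ⟨j, hj1, hjK, rfl⟩ := hx
      by_cases hy : ∃ l, 1 ≤ l ∧ l ≤ K ∧ y = a l
      · obtain ⟨l, hl1, hlK, rfl⟩ := hy
        have hcases := comp j l hj1 hjK hl1 hlK hxy
        have himp : crownU K a g (a l) ≤ crownU K a g (a j) := by
          rw [U_at g l hl1 hlK, U_at g j hj1 hjK]
          rcases hcases with rfl | ⟨hev, hl2, hcase⟩
          · exact le_rfl
          · have hEl := hE l hev hl2 hlK
            rcases hcase with rfl | rfl
            · exact le_of_lt hEl.1
            · exact hEl.2.2
        have hsimp : crownU K a f (a l) < crownU K a f (a j) →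
            crownU K a g (a l) < crownU K a g (a j) := by
          intro hlt
          rcases hcases with rfl | ⟨hev, hl2, hcase⟩
          · exact absurd hlt (lt_irrefl _)
          · have hEl := hE l hev hl2 hlK
            rw [U_at g l hl1 hlK]
            rcases hcase with rfl | rfl
            · rw [U_at g (l - 1) (by omega) (by omega)]
              exact hEl.1
            · exfalso
              rw [U_at f l hl1 hlK,
                U_at f _ (hnxtb l hl2 hlK).1 (hnxtb l hl2 hlK).2, hEl.2.1] at hlt
              exact lt_irrefl _ hlt
        exact ⟨fun _ => himp, fun hsp => ⟨himp, not_le.mpr (hsimp (not_le.mp hsp.2))⟩⟩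
      · have hUy : ∀ u : ℕ → ℕ, crownU K a u y = 0 := fun u => U_out u y hy
        constructor
        · intro _
          show crownU K a g y ≤ crownU K a g (a j)
          rw [hUy g]; exact Nat.zero_le _
        · intro _
          refine ⟨by rw [show crownR K a g (a j) y = (crownU K a g y ≤ crownU K a g (a j)) from rfl, hUy g]; exact Nat.zero_le _, ?_⟩
          show ¬ crownU K a g (a j) ≤ crownU K a g y
          rw [hUy g, U_at g j hj1 hjK]
          have := hg j hj1 hjK
          omega
    · by_cases hy : ∃ l, 1 ≤ l ∧ l ≤ K ∧ y = a l
      · obtain ⟨l, hl1, hlK, rfl⟩ := hy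
        constructor
        · intro hR
          exfalso
          have hR' : crownU K a f (a l) ≤ crownU K a f x := hR
          rw [U_at f l hl1 hlK, U_out f x hx] at hR'
          have := hf l hl1 hlK
          omega
        · intro hsp
          exfalso
          have hR' : crownU K a f (a l) ≤ crownU K a f x := hsp.1
          rw [U_at f l hl1 hlK, U_out f x hx] at hR'
          have := hf l hl1 hlK
          omega
      · constructor
        · intro _
          show crownU K a g y ≤ crownU K a g x
          rw [U_out g x hx, U_out g y hy]
        · intro hsp
          exfalso
          apply hsp.2
          show crownU K a f x ≤ crownU K a f y
          rw [U_out f x hx, U_out f y hy]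
  -- positivity of the crown utilities
  have hf1pos : ∀ j, 1 ≤ j → j ≤ K → 1 ≤ cf1 K m j := by
    intro j h1 h2; unfold cf1; split_ifs <;> omega
  have hf2pos : ∀ j, 1 ≤ j → j ≤ K → 1 ≤ cf2 K j := by
    intro j h1 h2; unfold cf2; split_ifs <;> omega
  have hgpos : ∀ c j, 1 ≤ j → j ≤ K → 1 ≤ cg c j := by
    intro c j h1 h2; unfold cg; split_ifs <;> omega
  -- edge computations
  have hgedge : ∀ c l, c % 2 = 0 → 1 < c → Even l → 1 < l → l ≤ K →
      cg c l < cg c (l - 1) ∧ cg c l ≤ cg c (if l = K then 1 else l + 1) := by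
    intro c l hc0 hc1 hl hl1 hlK
    have hl0 : l % 2 = 0 := Nat.even_iff.mp hl
    constructor
    · unfold cg; split_ifs <;> omega
    · unfold cg; split_ifs <;> omega
  have hf1edge : ∀ l, Even l → 1 < l → l ≤ K →
      cf1 K m (if l = K then 1 else l + 1) = cf1 K m l := by
    intro l hl hl1 hlK
    have hl0 : l % 2 = 0 := Nat.even_iff.mp hl
    unfold cf1; split_ifs <;> omega
  have hf2edge : ∀ l, Even l → 1 < l → l ≤ K →
      cf2 K (if l = K then 1 else l + 1) = cf2 K l := by
    intro l hl hl1 hlK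
    have hl0 : l % 2 = 0 := Nat.even_iff.mp hl
    unfold cf2; split_ifs <;> omega
  have hf1strict : ∀ l, Even l → 1 < l → l < K → cf1 K m l < cf1 K m (l - 1) := by
    intro l hl hl1 hlK
    have hl0 : l % 2 = 0 := Nat.even_iff.mp hl
    unfold cf1; split_ifs <;> omega
  have hf2Ka : cf2 K (K - 1) = 2 := by unfold cf2; split_ifs <;> omega
  have hf2Kb : cf2 K K = 1 := by unfold cf2; split_ifs <;> omega
  -- the two preferences
  refine ⟨crownR K a (cf1 K m), crownR K a (cf2 K), crownR_isPref _ _ _,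
    crownR_isPref _ _ _, ?_⟩
  rintro ⟨Rs, ⟨hRsPref, hRsUB⟩, hMin⟩
  have hRs1 : SC Rs (crownR K a (cf1 K m)) :=
    hRsUB _ (Set.mem_insert _ _)
  have hRs2 : SC Rs (crownR K a (cf2 K)) :=
    hRsUB _ (Set.mem_insert_iff.mpr (Or.inr rfl))
  -- every upper bound, in particular Rs, is strict on left edges
  have hstrict : ∀ l, Even l → 1 < l → l ≤ K → SPref Rs (a (l - 1)) (a l) := by
    intro l hl hl1 hlK
    have hle := (hedg l hl1 hlK hl).1.1
    by_cases hlK' : l = K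
    · have e1 : crownU K a (cf2 K) (a l) = 1 := by
        rw [U_at _ l (by omega) hlK, hlK', hf2Kb]
      have e2 : crownU K a (cf2 K) (a (l - 1)) = 2 := by
        rw [U_at _ (l - 1) (by omega) (by omega), hlK', hf2Ka]
      refine (hRs2 (a (l - 1)) (a l) hle).2 ?_
      refine ⟨?_, ?_⟩
      · show crownU K a (cf2 K) (a l) ≤ crownU K a (cf2 K) (a (l - 1))
        rw [e1, e2]
        omega
      · show ¬ crownU K a (cf2 K) (a (l - 1)) ≤ crownU K a (cf2 K) (a l)
        rw [e1, e2]
        omega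
    · have hstr := hf1strict l hl hl1 (by omega)
      refine (hRs1 (a (l - 1)) (a l) hle).2 ?_
      refine ⟨?_, ?_⟩
      · show crownU K a (cf1 K m) (a l) ≤ crownU K a (cf1 K m) (a (l - 1))
        rw [U_at _ l (by omega) hlK, U_at _ (l - 1) (by omega) (by omega)]
        omega
      · show ¬ crownU K a (cf1 K m) (a (l - 1)) ≤ crownU K a (cf1 K m) (a l)
        rw [U_at _ l (by omega) hlK, U_at _ (l - 1) (by omega) (by omega)]
        omega
  -- Rs weakly prefers the bottom of each right edge to its top
  have hweak : ∀ l, Even l → 1 < l → l ≤ K → Rs (a l) (a (if l = K then 1 else l + 1)) := by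
    intro l hl hl1 hlK
    have hl0 : l % 2 = 0 := Nat.even_iff.mp hl
    by_contra hcon
    have hRs' : Rs (a (if l = K then 1 else l + 1)) (a l) :=
      (hRsPref.1 _ _).resolve_left hcon
    have hsp : SPref Rs (a (if l = K then 1 else l + 1)) (a l) := ⟨hRs', hcon⟩
    have hUB : IsUB {crownR K a (cf1 K m), crownR K a (cf2 K)} (crownR K a (cg l)) := by
      refine ⟨crownR_isPref _ _ _, ?_⟩
      intro R hR
      rcases Set.mem_insert_iff.mp hR with rfl | hR
      · exact SCcrit _ _ hf1pos (hgpos l)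
          (fun l' hl' h1 h2 =>
            ⟨(hgedge l l' hl0 hl1 hl' h1 h2).1, hf1edge l' hl' h1 h2,
              (hgedge l l' hl0 hl1 hl' h1 h2).2⟩)
      · rw [Set.mem_singleton_iff.mp hR]
        exact SCcrit _ _ hf2pos (hgpos l)
          (fun l' hl' h1 h2 =>
            ⟨(hgedge l l' hl0 hl1 hl' h1 h2).1, hf2edge l' hl' h1 h2,
              (hgedge l l' hl0 hl1 hl' h1 h2).2⟩)
    have hsc := hMin _ hUB
    have hsp' := (hsc _ _ (hedg l hl1 hlK hl).2.1).2 hsp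
    have h1 : crownU K a (cg l) (a l) = 2 := by
      rw [U_at _ l (by omega) hlK]
      unfold cg; split_ifs <;> omega
    have h2 : crownU K a (cg l) (a (if l = K then 1 else l + 1)) = 2 := by
      rw [U_at _ _ (hnxtb l hl1 hlK).1 (hnxtb l hl1 hlK).2]
      unfold cg; split_ifs <;> omega
    apply hsp'.2
    show crownU K a (cg l) (a (if l = K then 1 else l + 1)) ≤ crownU K a (cg l) (a l)
    rw [h1, h2]
  -- chain the weak and strict preferences around the crown
  have chain : ∀ t, 1 ≤ t → t ≤ m → Rs (a 2) (a (2 * t)) := by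
    intro t
    induction t with
    | zero => intro h; omega
    | succ n ih =>
      intro _ hle
      by_cases hn : n = 0
      · subst hn
        have h22 : Rs (a 2) (a 2) := (hRsPref.1 (a 2) (a 2)).elim id id
        have he : 2 * (0 + 1) = 2 := by omega
        rw [he]
        exact h22
      · have hprev := ih (by omega) (by omega)
        have hw := hweak (2 * n) ⟨n, by omega⟩ (by omega) (by omega)
        rw [if_neg (by omega : ¬ 2 * n = K)] at hw
        have hs := (hstrict (2 * n + 2) ⟨n + 1, by omega⟩ (by omega) (by omega)).1
        have hidx : 2 * n + 2 - 1 = 2 * n + 1 := by omega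
        rw [hidx] at hs
        have hstep : Rs (a (2 * n)) (a (2 * n + 2)) := hRsPref.2 hw hs
        have hall : Rs (a 2) (a (2 * n + 2)) := hRsPref.2 hprev hstep
        have he : 2 * (n + 1) = 2 * n + 2 := by omega
        rw [he]
        exact hall
  have hK2 : Rs (a 2) (a K) := by
    have := chain m (by omega) le_rfl
    rw [show 2 * m = K by omega] at this
    exact this
  have hKw := hweak K hKe (by omega) le_rfl
  rw [if_pos rfl] at hKw
  have h21 : Rs (a 2) (a 1) := hRsPref.2 hK2 hKw
  have hs2 := hstrict 2 ⟨1, rfl⟩ (by omega) (by omega)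
  have hidx : (2 : ℕ) - 1 = 1 := rfl
  rw [hidx] at hs2
  exact hs2.2 h21
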